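/- For fixed h₁ ≥ 0 with 1 + σ_w² h₁² + σ_n² f h₁ > 0 on the domain of interest, the function Φ(f) = (1/ρ)·((σ_n² ρ + (1+σ_n²)(1+σ_w² h₁²)) / (1 + σ_w² h₁² + σ_n² f h₁))²·f² + (1+σ_n²) f², restricted to f ≤ 0, is strictly decreasing in f (i.e., strictly increasing in −f); consequently the equation Φ(f) = ρ has a unique solution f_{21} ≤ 0 in the region {f ≤ 0 : 1 + σ_w² h₁² + σ_n² f h₁ > 0}. -/

import Mathlib

/-- Uniqueness of the feedback gain `f₂₁`: for fixed relay tap `h₁ ≥ 0`, the function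
`Φ(f) = (1/ρ)((σ_n² ρ + (1+σ_n²)(1+σ_w² h₁²)) / (1 + σ_w² h₁² + σ_n² f h₁))² f²
+ (1+σ_n²) f²`, restricted to the region `{f ≤ 0 : 1 + σ_w² h₁² + σ_n² f h₁ > 0}`,
is strictly decreasing in `f`; consequently `Φ(f) = ρ` has a unique solution there. -/
theorem f21_equation_unique_solution (ρ σn2 σw2 h₁ : ℝ)
    (hρ : 0 < ρ) (hσn2 : 0 < σn2) (hσw2 : 0 ≤ σw2) (hh : 0 ≤ h₁) :
    let Φ : ℝ → ℝ := fun f =>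
      (1 / ρ) * ((σn2 * ρ + (1 + σn2) * (1 + σw2 * h₁ ^ 2))
          / (1 + σw2 * h₁ ^ 2 + σn2 * f * h₁)) ^ 2 * f ^ 2
        + (1 + σn2) * f ^ 2
    let S : Set ℝ := {f : ℝ | f ≤ 0 ∧ 0 < 1 + σw2 * h₁ ^ 2 + σn2 * f * h₁}
    StrictAntiOn Φ S ∧ ∃! f : ℝ, f ∈ S ∧ Φ f = ρ := by
  intro Φ S
  obtain ⟨A, hAdef⟩ : ∃ A : ℝ, A = 1 + σw2 * h₁ ^ 2 := ⟨_, rfl⟩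
  obtain ⟨B, hBdef⟩ : ∃ B : ℝ, B = σn2 * h₁ := ⟨_, rfl⟩
  obtain ⟨C, hCdef⟩ : ∃ C : ℝ,
      C = σn2 * ρ + (1 + σn2) * (1 + σw2 * h₁ ^ 2) := ⟨_, rfl⟩
  have hA0 : 0 < A := by rw [hAdef]; positivity
  have hB0 : 0 ≤ B := by rw [hBdef]; positivity
  have hC0 : 0 < C := by rw [hCdef]; positivity
  have hΦeq : ∀ f, Φ f = (1 / ρ) * (C / (A + B * f)) ^ 2 * f ^ 2
      + (1 + σn2) * f ^ 2 := by
    intro f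
    show (1 / ρ) * ((σn2 * ρ + (1 + σn2) * (1 + σw2 * h₁ ^ 2))
          / (1 + σw2 * h₁ ^ 2 + σn2 * f * h₁)) ^ 2 * f ^ 2
        + (1 + σn2) * f ^ 2 = _
    rw [hAdef, hBdef, hCdef]
    ring_nf
  have hSeq : ∀ f : ℝ, f ∈ S ↔ f ≤ 0 ∧ 0 < A + B * f := by
    intro f
    show (f ≤ 0 ∧ 0 < 1 + σw2 * h₁ ^ 2 + σn2 * f * h₁) ↔ _
    rw [hAdef, hBdef]
    constructor <;> rintro ⟨h1, h2⟩ <;> exact ⟨h1, by nlinarith⟩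
  -- strict antitonicity
  have hanti : StrictAntiOn Φ S := by
    intro f1 hf1 f2 hf2 hlt
    obtain ⟨hf1le, hd1⟩ := (hSeq f1).1 hf1
    obtain ⟨hf2le, hd2⟩ := (hSeq f2).1 hf2
    have hd12 : A + B * f1 ≤ A + B * f2 := by nlinarith
    have hu : C * (-f2) / (A + B * f2) < C * (-f1) / (A + B * f1) := by
      have h1 : C * (-f2) / (A + B * f2) ≤ C * (-f2) / (A + B * f1) :=
        div_le_div_of_nonneg_left (by nlinarith) hd1 hd12
      have h2 : C * (-f2) / (A + B * f1) < C * (-f1) / (A + B * f1) := by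
        apply div_lt_div_of_pos_right _ hd1
        nlinarith
      linarith
    have hunn : 0 ≤ C * (-f2) / (A + B * f2) :=
      div_nonneg (by nlinarith) hd2.le
    have hsq : (C * (-f2) / (A + B * f2)) ^ 2
        < (C * (-f1) / (A + B * f1)) ^ 2 :=
      pow_lt_pow_left₀ hu hunn two_ne_zero
    have hf2sq : f2 ^ 2 < f1 ^ 2 := by nlinarith
    have e1 : (C / (A + B * f1)) ^ 2 * f1 ^ 2
        = (C * (-f1) / (A + B * f1)) ^ 2 := by
      rw [div_pow, div_pow, mul_pow]; ring
    have e2 : (C / (A + B * f2)) ^ 2 * f2 ^ 2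
        = (C * (-f2) / (A + B * f2)) ^ 2 := by
      rw [div_pow, div_pow, mul_pow]; ring
    rw [hΦeq f1, hΦeq f2]
    have t1 : (1 / ρ) * (C / (A + B * f2)) ^ 2 * f2 ^ 2
        < (1 / ρ) * (C / (A + B * f1)) ^ 2 * f1 ^ 2 := by
      rw [mul_assoc, mul_assoc, e1, e2]
      exact mul_lt_mul_of_pos_left hsq (by positivity)
    nlinarith [hf2sq]
  refine ⟨hanti, ?_⟩
  -- existence via IVT on [fs, 0] with fs = -ρA/(C+ρB)
  have hden : 0 < C + ρ * B := by positivity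
  have hne : C + ρ * B ≠ 0 := hden.ne'
  obtain ⟨fs, hfsdef⟩ : ∃ fs : ℝ, fs = -(ρ * A) / (C + ρ * B) := ⟨_, rfl⟩
  have hfs0 : fs < 0 := by
    rw [hfsdef]
    apply div_neg_of_neg_of_pos _ hden
    nlinarith
  have hdfs : A + B * fs = A * C / (C + ρ * B) := by
    rw [hfsdef]
    field_simp
    ring
  have hdfs0 : 0 < A + B * fs := by rw [hdfs]; positivity
  have hdpos : ∀ x ∈ Set.Icc fs 0, 0 < A + B * x := by
    intro x hx
    nlinarith [hx.1]
  have hΦ0 : Φ 0 = 0 := by rw [hΦeq]; ring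
  have hΦfs : ρ ≤ Φ fs := by
    have hval : Φ fs = ρ + (1 + σn2) * fs ^ 2 := by
      rw [hΦeq, hdfs, hfsdef]
      field_simp
    nlinarith [sq_nonneg fs]
  have hcont : ContinuousOn Φ (Set.Icc fs 0) := by
    have : Φ = fun f => (1 / ρ) * (C / (A + B * f)) ^ 2 * f ^ 2
        + (1 + σn2) * f ^ 2 := funext hΦeq
    rw [this]
    apply ContinuousOn.add _ (by fun_prop)
    apply ContinuousOn.mul _ (by fun_prop)
    apply ContinuousOn.mul continuousOn_const
    apply ContinuousOn.pow
    apply ContinuousOn.div continuousOn_const (by fun_prop)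
    intro x hx
    exact (hdpos x hx).ne'
  have hmem : ρ ∈ Set.Icc (Φ 0) (Φ fs) := ⟨by rw [hΦ0]; exact hρ.le, hΦfs⟩
  obtain ⟨f, hfIcc, hΦf⟩ := intermediate_value_Icc' hfs0.le hcont hmem
  have hfS : f ∈ S := (hSeq f).2 ⟨hfIcc.2, hdpos f hfIcc⟩
  refine ⟨f, ⟨hfS, hΦf⟩, ?_⟩
  rintro g ⟨hgS, hΦg⟩
  exact hanti.injOn hgS hfS (hΦg.trans hΦf.symm)
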